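/- Let n ∈ ℕ with n ≥ 2 and let G be a nonempty bounded subset of ℝⁿ. Let T be an invertible n×n real matrix and a⁽²⁾ ≡ TTᵗ. Let A₂ : ∂𝔹_n × ℝ → ℂⁿ be Lipschitz continuous on ∂𝔹_n × [0, diam(G)] with respect to the distance |θ'−θ''| + |r'−r''|, and let B₁, C : ℝⁿ → ℂ be twice continuously differentiable with gradients DB₁, DC. Let V : ℝⁿ∖{0} → ℂⁿ be defined by V(x) ≡ (s_n √(det a⁽²⁾))^{−1} |T⁻¹x|^{−n} xᵗ(a⁽²⁾)^{−1} + |x|^{2−n}A₂(x/|x|, |x|) + DB₁(x) ln|x| + DC(x), where s_n denotes the (n−1)-dimensional measure of ∂𝔹_n. Then sup{ (|x'−y|^{n}/|x'−x''|) |V(x'−y) − V(x''−y)| : x', x'' ∈ G, x' ≠ x'', y ∈ G∖𝔹_n(x', 2|x'−x''|) } < +∞. -/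

import Mathlib

open Metric Set MeasureTheory

/-- The continuous linear map on Euclidean space induced by a square real matrix. -/
noncomputable def matCLM {n : ℕ} (Λ : Matrix (Fin n) (Fin n) ℝ) :
    EuclideanSpace ℝ (Fin n) →L[ℝ] EuclideanSpace ℝ (Fin n) :=
  Matrix.toEuclideanCLM (𝕜 := ℝ) Λ

/-- The gradient (vector of partial derivatives) of a complex-valued function on `ℝⁿ`,
as a vector of `ℂⁿ`. -/
noncomputable def cgrad {n : ℕ} (f : EuclideanSpace ℝ (Fin n) → ℂ)
    (x : EuclideanSpace ℝ (Fin n)) : EuclideanSpace ℂ (Fin n) :=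
  (WithLp.equiv 2 ((_ : Fin n) → ℂ)).symm fun i => fderiv ℝ f x (EuclideanSpace.single i 1)

/-- The `(n-1)`-dimensional (Hausdorff) measure of the unit sphere `∂𝔹_n` of `ℝⁿ`. -/
noncomputable def sphereMeasure (n : ℕ) : ℝ :=
  (μH[(n : ℝ) - 1] (sphere (0 : EuclideanSpace ℝ (Fin n)) 1)).toReal



lemma lip_inv_pow (k : ℕ) {m s t : ℝ} (hm : 0 < m) (hs : m ≤ s) (ht : m ≤ t) :
    |(s ^ k)⁻¹ - (t ^ k)⁻¹| ≤ (k / m ^ (k + 1)) * |s - t| := by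
  have h := Convex.norm_image_sub_le_of_norm_hasDerivWithin_le
    (f := fun x : ℝ => (x ^ k)⁻¹) (f' := fun x : ℝ => -(k * x ^ (k - 1)) / (x ^ k) ^ 2)
    (s := Set.Ici m) (C := k / m ^ (k + 1)) ?_ ?_ (convex_Ici m) ht hs
  · simpa [Real.norm_eq_abs] using h
  · intro x hx
    have hx0 : 0 < x := hm.trans_le hx
    exact ((hasDerivAt_pow k x).inv (pow_ne_zero _ hx0.ne')).hasDerivWithinAt
  · intro x hx
    have hx0 : 0 < x := hm.trans_le hx
    rcases Nat.eq_zero_or_pos k with hk | hk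
    · subst hk; simp
    · obtain ⟨j, rfl⟩ : ∃ j, k = j + 1 := ⟨k - 1, by omega⟩
      have hxe : (x ^ (j + 1)) ^ 2 = x ^ j * x ^ (j + 2) := by ring
      have : ‖-(↑(j+1) * x ^ (j + 1 - 1)) / (x ^ (j+1)) ^ 2‖
          = (j+1 : ℝ) * x ^ j / (x ^ j * x ^ (j + 2)) := by
        rw [norm_div, norm_neg, ← hxe]
        rw [Real.norm_eq_abs, Real.norm_eq_abs, abs_of_nonneg (by positivity),
          abs_of_nonneg (by positivity)]
        norm_num
      rw [this]
      have hxx : ((j:ℝ) + 1) * x ^ j / (x ^ j * x ^ (j + 2)) = ((j:ℝ)+1) / x ^ (j+2) := by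
        field_simp
      rw [hxx]
      have hle : m ^ (j + 2) ≤ x ^ (j + 2) := pow_le_pow_left₀ hm.le hx _
      calc ((j:ℝ)+1) / x ^ (j + 2) ≤ ((j:ℝ)+1) / m ^ (j+2) := by gcongr
        _ = (↑(j+1) / m ^ (j + 1 + 1)) := by push_cast; ring

lemma lip_log {m s t : ℝ} (hm : 0 < m) (hs : m ≤ s) (ht : m ≤ t) :
    |Real.log s - Real.log t| ≤ m⁻¹ * |s - t| := by
  have h := Convex.norm_image_sub_le_of_norm_hasDerivWithin_le
    (f := Real.log) (f' := fun x : ℝ => x⁻¹)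
    (s := Set.Ici m) (C := m⁻¹) ?_ ?_ (convex_Ici m) ht hs
  · simpa [Real.norm_eq_abs] using h
  · intro x hx
    exact (Real.hasDerivAt_log (hm.trans_le hx).ne').hasDerivWithinAt
  · intro x hx
    have hx0 : 0 < x := hm.trans_le hx
    rw [Real.norm_eq_abs, abs_of_nonneg (by positivity)]
    exact inv_anti₀ hm hx

lemma neg_log_le_inv {x : ℝ} (hx : 0 < x) : -Real.log x ≤ x⁻¹ := by
  have := Real.log_le_sub_one_of_pos (x := x⁻¹) (by positivity)
  rw [Real.log_inv] at this
  have : -Real.log x ≤ x⁻¹ - 1 := this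
  linarith

lemma unit_vec_lip {E : Type*} [NormedAddCommGroup E] [NormedSpace ℝ E] {a b : E}
    (ha : a ≠ 0) (hb : b ≠ 0) :
    ‖‖a‖⁻¹ • a - ‖b‖⁻¹ • b‖ ≤ 2 * ‖a - b‖ / ‖a‖ := by
  have ha0 : (0:ℝ) < ‖a‖ := norm_pos_iff.mpr ha
  have hb0 : (0:ℝ) < ‖b‖ := norm_pos_iff.mpr hb
  have key : ‖a‖⁻¹ • a - ‖b‖⁻¹ • b = ‖a‖⁻¹ • (a - b) + (‖a‖⁻¹ - ‖b‖⁻¹) • b := by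
    rw [smul_sub, sub_smul]; abel
  rw [key]
  have h1 : ‖‖a‖⁻¹ • (a - b)‖ = ‖a - b‖ / ‖a‖ := by
    rw [norm_smul, Real.norm_eq_abs, abs_of_nonneg (by positivity)]
    rw [inv_mul_eq_div]
  have h2 : ‖(‖a‖⁻¹ - ‖b‖⁻¹) • b‖ ≤ ‖a - b‖ / ‖a‖ := by
    rw [norm_smul, Real.norm_eq_abs]
    have : |‖a‖⁻¹ - ‖b‖⁻¹| = |‖b‖ - ‖a‖| / (‖a‖ * ‖b‖) := by
      rw [inv_sub_inv ha0.ne' hb0.ne', abs_div, abs_of_pos (mul_pos ha0 hb0)]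
    rw [this]
    have habs : |‖b‖ - ‖a‖| ≤ ‖a - b‖ := by
      rw [abs_sub_comm]
      exact abs_norm_sub_norm_le a b
    calc |‖b‖ - ‖a‖| / (‖a‖ * ‖b‖) * ‖b‖ = |‖b‖ - ‖a‖| / ‖a‖ := by
          field_simp
      _ ≤ ‖a - b‖ / ‖a‖ := (div_le_div_iff_of_pos_right ha0).mpr habs
  calc ‖‖a‖⁻¹ • (a - b) + (‖a‖⁻¹ - ‖b‖⁻¹) • b‖
      ≤ ‖‖a‖⁻¹ • (a - b)‖ + ‖(‖a‖⁻¹ - ‖b‖⁻¹) • b‖ := norm_add_le _ _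
    _ ≤ ‖a - b‖ / ‖a‖ + ‖a - b‖ / ‖a‖ := by rw [h1]; linarith
    _ = 2 * ‖a - b‖ / ‖a‖ := by ring

noncomputable def gradCLM (n : ℕ) :
    (EuclideanSpace ℝ (Fin n) →L[ℝ] ℂ) →L[ℝ] EuclideanSpace ℂ (Fin n) :=
  LinearMap.toContinuousLinearMap
  { toFun := fun T => (WithLp.equiv 2 ((_ : Fin n) → ℂ)).symm
      fun i => T (EuclideanSpace.single i 1)
    map_add' := by intro T S; ext i; simp
    map_smul' := by intro c T; ext i; simp }

lemma cgrad_eq {n : ℕ} (f : EuclideanSpace ℝ (Fin n) → ℂ) (x : EuclideanSpace ℝ (Fin n)) :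
    cgrad f x = gradCLM n (fderiv ℝ f x) := rfl

noncomputable def vecMulCLM {n : ℕ} (Msq : Matrix (Fin n) (Fin n) ℝ) :
    EuclideanSpace ℝ (Fin n) →L[ℝ] EuclideanSpace ℂ (Fin n) :=
  LinearMap.toContinuousLinearMap
  { toFun := fun x => (WithLp.equiv 2 ((_ : Fin n) → ℂ)).symm
      fun i => ((Matrix.vecMul (fun j => x j) Msq i : ℝ) : ℂ)
    map_add' := by
      intro x y; ext i
      simp [Matrix.vecMul, dotProduct,
        Finset.sum_add_distrib, add_mul]
    map_smul' := by
      intro c x; ext i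
      simp [Matrix.vecMul, dotProduct,
        Finset.mul_sum, mul_assoc] }

lemma vecMulCLM_eq {n : ℕ} (Msq : Matrix (Fin n) (Fin n) ℝ) (x : EuclideanSpace ℝ (Fin n)) :
    ((WithLp.equiv 2 ((_ : Fin n) → ℂ)).symm
      fun i => ((Matrix.vecMul (fun j => x j) Msq i : ℝ) : ℂ)) = vecMulCLM Msq x := rfl

lemma matCLM_inv_bound {n : ℕ} (T : Matrix (Fin n) (Fin n) ℝ) (hT : IsUnit T)
    (x : EuclideanSpace ℝ (Fin n)) : ‖x‖ ≤ ‖matCLM T‖ * ‖matCLM T⁻¹ x‖ := by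
  have hdet := (Matrix.isUnit_iff_isUnit_det T).mp hT
  have h1 : T * T⁻¹ = 1 := Matrix.mul_nonsing_inv T hdet
  have hx : matCLM T (matCLM T⁻¹ x) = x := by
    have h2 := congrArg (Matrix.toEuclideanCLM (𝕜 := ℝ)) h1
    rw [map_mul, map_one] at h2
    calc matCLM T (matCLM T⁻¹ x)
        = ((Matrix.toEuclideanCLM (𝕜 := ℝ) T) * (Matrix.toEuclideanCLM (𝕜 := ℝ) T⁻¹)) x := rfl
      _ = x := by rw [h2]; rfl
  conv_lhs => rw [← hx]
  exact (matCLM T).le_opNorm _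

lemma cgrad_bounds {n : ℕ} (f : EuclideanSpace ℝ (Fin n) → ℂ) (hf : ContDiff ℝ 2 f) (D : ℝ) :
    ∃ K : ℝ, 0 ≤ K ∧ (∀ x ∈ closedBall (0 : EuclideanSpace ℝ (Fin n)) D, ‖cgrad f x‖ ≤ K) ∧
      ∀ x ∈ closedBall (0 : EuclideanSpace ℝ (Fin n)) D,
        ∀ y ∈ closedBall (0 : EuclideanSpace ℝ (Fin n)) D,
          ‖cgrad f x - cgrad f y‖ ≤ K * ‖x - y‖ := by
  have hg : ContDiff ℝ 1 (fderiv ℝ f) := hf.fderiv_right (by norm_num)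
  obtain ⟨C1, hC1⟩ := (isCompact_closedBall (0 : EuclideanSpace ℝ (Fin n)) D)
    |>.exists_bound_of_continuousOn hg.continuous.continuousOn
  obtain ⟨C2, hC2⟩ := (isCompact_closedBall (0 : EuclideanSpace ℝ (Fin n)) D)
    |>.exists_bound_of_continuousOn (hg.continuous_fderiv one_ne_zero).continuousOn
  have hLip : ∀ x ∈ closedBall (0 : EuclideanSpace ℝ (Fin n)) D,
      ∀ y ∈ closedBall (0 : EuclideanSpace ℝ (Fin n)) D,
        ‖fderiv ℝ f x - fderiv ℝ f y‖ ≤ C2 * ‖x - y‖ := by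
    intro x hx y hy
    exact Convex.norm_image_sub_le_of_norm_fderiv_le
      (fun z _ => (hg.differentiable one_ne_zero).differentiableAt) hC2
      (convex_closedBall _ _) hy hx
  refine ⟨‖gradCLM n‖ * (|C1| + |C2|), by positivity, ?_, ?_⟩
  · intro x hx
    rw [cgrad_eq]
    calc ‖gradCLM n (fderiv ℝ f x)‖ ≤ ‖gradCLM n‖ * ‖fderiv ℝ f x‖ :=
          (gradCLM n).le_opNorm _
      _ ≤ ‖gradCLM n‖ * (|C1| + |C2|) := by
          have := hC1 x hx
          have h2 : ‖fderiv ℝ f x‖ ≤ |C1| + |C2| := by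
            have := le_abs_self C1
            have := abs_nonneg C2
            linarith [hC1 x hx]
          exact mul_le_mul_of_nonneg_left h2 (ContinuousLinearMap.opNorm_nonneg _)
  · intro x hx y hy
    rw [cgrad_eq, cgrad_eq, ← map_sub]
    calc ‖gradCLM n (fderiv ℝ f x - fderiv ℝ f y)‖
        ≤ ‖gradCLM n‖ * ‖fderiv ℝ f x - fderiv ℝ f y‖ := (gradCLM n).le_opNorm _
      _ ≤ ‖gradCLM n‖ * (C2 * ‖x - y‖) :=
          mul_le_mul_of_nonneg_left (hLip x hx y hy) (ContinuousLinearMap.opNorm_nonneg _)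
      _ ≤ ‖gradCLM n‖ * ((|C1| + |C2|) * ‖x - y‖) := by
          have h2 : C2 ≤ |C1| + |C2| := by
            have := le_abs_self C2
            have := abs_nonneg C1
            linarith
          exact mul_le_mul_of_nonneg_left
            (mul_le_mul_of_nonneg_right h2 (norm_nonneg _))
            (ContinuousLinearMap.opNorm_nonneg _)
      _ = ‖gradCLM n‖ * (|C1| + |C2|) * ‖x - y‖ := by ring

set_option maxHeartbeats 2000000 in
/-- if `V(x) = (s_n √(det a⁽²⁾))⁻¹ ‖T⁻¹x‖^(-n) xᵗ(a⁽²⁾)⁻¹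
+ ‖x‖^(2-n) A₂(x/‖x‖, ‖x‖) + DB₁(x) ln ‖x‖ + DC(x)` with `a⁽²⁾ = T Tᵗ`,
`A₂` Lipschitz continuous on `∂𝔹_n × [0, diam G]` (with constant `L` for the
distance `‖θ'-θ''‖ + |r'-r''|`) and `B₁, C` twice continuously differentiable,
then `sup { (‖x'-y‖^n/‖x'-x''‖) ‖V(x'-y) - V(x''-y)‖ } < ∞`, the supremum being
over `x', x'' ∈ G`, `x' ≠ x''`, `y ∈ G ∖ 𝔹_n(x', 2‖x'-x''‖)`. -/
theorem stmt_14 {n : ℕ} (hn : 2 ≤ n) (G : Set (EuclideanSpace ℝ (Fin n)))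
    (hGne : G.Nonempty) (hGb : Bornology.IsBounded G)
    (T : Matrix (Fin n) (Fin n) ℝ) (hT : IsUnit T)
    (a2 : Matrix (Fin n) (Fin n) ℝ) (ha2 : a2 = T * T.transpose)
    (A₂ : EuclideanSpace ℝ (Fin n) → ℝ → EuclideanSpace ℂ (Fin n))
    (L : ℝ)
    (hA₂ : ∀ p ∈ (sphere (0 : EuclideanSpace ℝ (Fin n)) 1) ×ˢ (Icc 0 (diam G)),
           ∀ q ∈ (sphere (0 : EuclideanSpace ℝ (Fin n)) 1) ×ˢ (Icc 0 (diam G)),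
             ‖A₂ p.1 p.2 - A₂ q.1 q.2‖ ≤ L * (‖p.1 - q.1‖ + |p.2 - q.2|))
    (B₁ C : EuclideanSpace ℝ (Fin n) → ℂ)
    (hB₁ : ContDiff ℝ 2 B₁) (hC : ContDiff ℝ 2 C)
    (V : EuclideanSpace ℝ (Fin n) → EuclideanSpace ℂ (Fin n))
    (hV : ∀ x : EuclideanSpace ℝ (Fin n), x ≠ 0 →
      V x = (((sphereMeasure n * Real.sqrt a2.det)⁻¹ *
              ‖matCLM T⁻¹ x‖ ^ (-(n : ℝ)) : ℝ) : ℂ) •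
              ((WithLp.equiv 2 ((_ : Fin n) → ℂ)).symm fun i =>
                ((Matrix.vecMul (fun j => x j) a2⁻¹ i : ℝ) : ℂ))
        + ((‖x‖ ^ ((2 : ℝ) - n) : ℝ) : ℂ) • A₂ (‖x‖⁻¹ • x) ‖x‖
        + ((Real.log ‖x‖ : ℝ) : ℂ) • cgrad B₁ x
        + cgrad C x) :
    ∃ M : ℝ, ∀ x' ∈ G, ∀ x'' ∈ G, x' ≠ x'' → ∀ y ∈ G,
      y ∉ ball x' (2 * ‖x' - x''‖) →
        ‖x' - y‖ ^ (n : ℝ) * ‖V (x' - y) - V (x'' - y)‖ ≤ M * ‖x' - x''‖ := by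
  classical
  haveI : NeZero n := ⟨by omega⟩
  obtain ⟨k, hk⟩ : ∃ k, n = k + 2 := ⟨n - 2, by omega⟩
  set D := diam G with hD
  have hD0 : 0 ≤ D := diam_nonneg
  set Sc := matCLM T⁻¹ with hSc
  set c := (sphereMeasure n * Real.sqrt a2.det)⁻¹ with hc
  -- lower bound for Sc
  have hTlow : ∀ x : EuclideanSpace ℝ (Fin n), ‖x‖ ≤ ‖matCLM T‖ * ‖Sc x‖ :=
    fun x => matCLM_inv_bound T hT x
  have hNT : 0 < ‖matCLM T‖ := by
    by_contra h
    push_neg at h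
    have h1 := hTlow (EuclideanSpace.single (0 : Fin n) (1 : ℝ))
    rw [EuclideanSpace.norm_single, norm_one] at h1
    have h0 := mul_nonpos_of_nonpos_of_nonneg h
      (norm_nonneg (Sc (EuclideanSpace.single (0 : Fin n) (1 : ℝ))))
    linarith
  -- bound for A₂ on the compact set
  set θ0 := EuclideanSpace.single (0 : Fin n) (1 : ℝ) with hθ0
  have hsph : θ0 ∈ sphere (0 : EuclideanSpace ℝ (Fin n)) 1 := by
    rw [mem_sphere_zero_iff_norm, hθ0, EuclideanSpace.norm_single, norm_one]
  set K₂ := ‖A₂ θ0 0‖ + |L| * (2 + D) with hK2def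
  have hK20 : 0 ≤ K₂ := by
    rw [hK2def]
    have := abs_nonneg L
    have := norm_nonneg (A₂ θ0 0)
    nlinarith
  have hK2 : ∀ θ ∈ sphere (0 : EuclideanSpace ℝ (Fin n)) 1, ∀ ρ ∈ Icc (0:ℝ) D,
      ‖A₂ θ ρ‖ ≤ K₂ := by
    intro θ hθ ρ hρ
    have h := hA₂ (θ, ρ) ⟨hθ, hρ⟩ (θ0, 0) ⟨hsph, le_refl 0, hD0⟩
    have hθn : ‖θ‖ = 1 := mem_sphere_zero_iff_norm.mp hθ
    have hsub : ‖θ - θ0‖ ≤ 2 := by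
      calc ‖θ - θ0‖ ≤ ‖θ‖ + ‖θ0‖ := norm_sub_le _ _
        _ = 2 := by rw [hθn, hθ0, EuclideanSpace.norm_single, norm_one]; norm_num
    have habs : |ρ - 0| ≤ D := by rw [sub_zero, abs_of_nonneg hρ.1]; exact hρ.2
    have hL : L * (‖θ - θ0‖ + |ρ - 0|) ≤ |L| * (2 + D) := by
      calc L * (‖θ - θ0‖ + |ρ - 0|) ≤ |L| * (‖θ - θ0‖ + |ρ - 0|) :=
            mul_le_mul_of_nonneg_right (le_abs_self L)
              (add_nonneg (norm_nonneg _) (abs_nonneg _))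
        _ ≤ |L| * (2 + D) := mul_le_mul_of_nonneg_left (by linarith) (abs_nonneg L)
    have h2 := norm_sub_norm_le (A₂ θ ρ) (A₂ θ0 0)
    simp only at h
    rw [hK2def]
    linarith
  obtain ⟨KB, hKB0, hKBb, hKBl⟩ := cgrad_bounds B₁ hB₁ D
  obtain ⟨KC, hKC0, hKCb, hKCl⟩ := cgrad_bounds C hC D
  set C1 := |c| * ((n : ℝ) * (2*‖matCLM T‖)^(n+1) * ‖Sc‖ * ‖vecMulCLM (n := n) a2⁻¹‖
      + (2*‖matCLM T‖)^n * ‖vecMulCLM (n := n) a2⁻¹‖) with hC1def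
  set C2 := (k:ℝ) * 2^(k+1) * K₂ * D + |L| * 2^k * (2*D + D^2) with hC2def
  set C3 := KB * (4 * D^(k+1) + 2*|Real.log D| * D^(k+2)) with hC3def
  set C4 := D^n * KC with hC4def
  refine ⟨C1 + C2 + C3 + C4, ?_⟩
  intro x' hx' x'' hx'' hne y hy hyb
  set a := x' - y with hadef
  set b := x'' - y with hbdef
  set d := ‖x' - x''‖ with hddef
  have hd0 : 0 < d := by rw [hddef]; exact norm_sub_pos_iff.mpr hne
  set r := ‖a‖ with hrdef
  have h2d : 2 * d ≤ r := by
    have hnb : ¬ dist y x' < 2 * d := fun h => hyb (mem_ball.mpr h)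
    push_neg at hnb
    rw [dist_comm, dist_eq_norm] at hnb
    exact hnb
  have hr0 : 0 < r := lt_of_lt_of_le (by linarith) h2d
  have hrD : r ≤ D := by
    rw [hrdef, hadef, ← dist_eq_norm]
    exact dist_le_diam_of_mem hGb hx' hy
  have hbD : ‖b‖ ≤ D := by
    rw [hbdef, ← dist_eq_norm]
    exact dist_le_diam_of_mem hGb hx'' hy
  have hab : a - b = x' - x'' := by rw [hadef, hbdef]; abel
  have habn : ‖a - b‖ = d := by rw [hab]
  have hblow : r / 2 ≤ ‖b‖ := by
    have h1 : r - ‖b‖ ≤ ‖a - b‖ := norm_sub_norm_le a b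
    rw [habn] at h1; linarith
  have hb0' : 0 < ‖b‖ := by linarith
  have ha0 : a ≠ 0 := norm_pos_iff.mp hr0
  have hb0 : b ≠ 0 := norm_pos_iff.mp hb0'
  have hVa := hV a ha0
  have hVb := hV b hb0
  rw [vecMulCLM_eq] at hVa
  rw [vecMulCLM_eq] at hVb
  -- abbreviations for the four difference terms
  set X1 := ((c * ‖Sc a‖ ^ (-(n : ℝ)) : ℝ) : ℂ) • vecMulCLM (n := n) a2⁻¹ a
      - ((c * ‖Sc b‖ ^ (-(n : ℝ)) : ℝ) : ℂ) • vecMulCLM (n := n) a2⁻¹ b with hX1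
  set X2 := ((r ^ ((2 : ℝ) - n) : ℝ) : ℂ) • A₂ (r⁻¹ • a) r
      - ((‖b‖ ^ ((2 : ℝ) - n) : ℝ) : ℂ) • A₂ (‖b‖⁻¹ • b) ‖b‖ with hX2
  set X3 := ((Real.log r : ℝ) : ℂ) • cgrad B₁ a
      - ((Real.log ‖b‖ : ℝ) : ℂ) • cgrad B₁ b with hX3
  set X4 := cgrad C a - cgrad C b with hX4
  have hsplit : V a - V b = X1 + X2 + X3 + X4 := by
    rw [hVa, hVb, hX1, hX2, hX3, hX4]; abel
  -- some generic facts
  have hm0 : (0:ℝ) < r / 2 := by linarith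
  have hrpow : (0:ℝ) < r ^ n := by positivity
  have hdist_ab : |r - ‖b‖| ≤ d := by
    rw [← habn]
    exact abs_norm_sub_norm_le a b
  -- Term 1
  have hT1 : r ^ n * ‖X1‖ ≤ C1 * d := by
    have hNTne : ‖matCLM T‖ ≠ 0 := hNT.ne'
    have hrne : r ≠ 0 := hr0.ne'
    set m1 := r / (2 * ‖matCLM T‖) with hm1
    have hm10 : 0 < m1 := by
      rw [hm1]; exact div_pos hr0 (mul_pos two_pos hNT)
    have hsa : m1 ≤ ‖Sc a‖ := by
      rw [hm1, div_le_iff₀ (mul_pos two_pos hNT)]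
      have h1 : r ≤ ‖matCLM T‖ * ‖Sc a‖ := hTlow a
      have h0 : 0 ≤ ‖matCLM T‖ * ‖Sc a‖ := mul_nonneg (norm_nonneg _) (norm_nonneg _)
      have h2 : ‖Sc a‖ * (2 * ‖matCLM T‖) = 2 * (‖matCLM T‖ * ‖Sc a‖) := by ring
      rw [h2]; linarith
    have hsb : m1 ≤ ‖Sc b‖ := by
      rw [hm1, div_le_iff₀ (mul_pos two_pos hNT)]
      have h1 : ‖b‖ ≤ ‖matCLM T‖ * ‖Sc b‖ := hTlow b
      have h0 : 0 ≤ ‖matCLM T‖ * ‖Sc b‖ := mul_nonneg (norm_nonneg _) (norm_nonneg _)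
      have h2 : ‖Sc b‖ * (2 * ‖matCLM T‖) = 2 * (‖matCLM T‖ * ‖Sc b‖) := by ring
      rw [h2]; linarith
    have hinvdiff : |(‖Sc a‖ ^ n)⁻¹ - (‖Sc b‖ ^ n)⁻¹| ≤ ((n:ℝ) / m1 ^ (n+1)) * (‖Sc‖ * d) := by
      have h := lip_inv_pow n hm10 hsa hsb
      have h2 : |‖Sc a‖ - ‖Sc b‖| ≤ ‖Sc‖ * d := by
        calc |‖Sc a‖ - ‖Sc b‖| ≤ ‖Sc a - Sc b‖ := abs_norm_sub_norm_le _ _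
          _ = ‖Sc (a - b)‖ := by rw [map_sub Sc a b]
          _ ≤ ‖Sc‖ * ‖a - b‖ := Sc.le_opNorm _
          _ = ‖Sc‖ * d := by rw [habn]
      calc |(‖Sc a‖ ^ n)⁻¹ - (‖Sc b‖ ^ n)⁻¹| ≤ ((n:ℝ) / m1 ^ (n+1)) * |‖Sc a‖ - ‖Sc b‖| := h
        _ ≤ ((n:ℝ) / m1 ^ (n+1)) * (‖Sc‖ * d) :=
            mul_le_mul_of_nonneg_left h2
              (div_nonneg (Nat.cast_nonneg n) (pow_pos hm10 _).le)
    have hrpa : ‖Sc a‖ ^ (-(n:ℝ)) = (‖Sc a‖ ^ n)⁻¹ := by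
      rw [← Real.rpow_natCast ‖Sc a‖ n, ← Real.rpow_neg (norm_nonneg _)]
    have hrpb : ‖Sc b‖ ^ (-(n:ℝ)) = (‖Sc b‖ ^ n)⁻¹ := by
      rw [← Real.rpow_natCast ‖Sc b‖ n, ← Real.rpow_neg (norm_nonneg _)]
    have hXeq : X1 = (((c * ‖Sc a‖ ^ (-(n : ℝ)) - c * ‖Sc b‖ ^ (-(n : ℝ)) : ℝ)) : ℂ)
        • vecMulCLM (n := n) a2⁻¹ a
        + ((c * ‖Sc b‖ ^ (-(n : ℝ)) : ℝ) : ℂ) • vecMulCLM (n := n) a2⁻¹ (a - b) := by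
      rw [hX1, Complex.ofReal_sub, map_sub (vecMulCLM (n := n) a2⁻¹) a b]
      module
    have hnorm : ‖X1‖ ≤ |c| * |(‖Sc a‖ ^ n)⁻¹ - (‖Sc b‖ ^ n)⁻¹|
        * (‖vecMulCLM (n := n) a2⁻¹‖ * r)
        + |c| * (‖Sc b‖ ^ n)⁻¹ * (‖vecMulCLM (n := n) a2⁻¹‖ * d) := by
      rw [hXeq]
      have e1 : ‖(((c * ‖Sc a‖ ^ (-(n : ℝ)) - c * ‖Sc b‖ ^ (-(n : ℝ)) : ℝ)) : ℂ)
          • vecMulCLM (n := n) a2⁻¹ a‖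
          ≤ |c| * |(‖Sc a‖ ^ n)⁻¹ - (‖Sc b‖ ^ n)⁻¹| * (‖vecMulCLM (n := n) a2⁻¹‖ * r) := by
        rw [norm_smul, Complex.norm_real, Real.norm_eq_abs, hrpa, hrpb, ← mul_sub, abs_mul]
        refine mul_le_mul_of_nonneg_left ?_ (mul_nonneg (abs_nonneg _) (abs_nonneg _))
        calc ‖vecMulCLM (n := n) a2⁻¹ a‖ ≤ ‖vecMulCLM (n := n) a2⁻¹‖ * ‖a‖ :=
              (vecMulCLM (n := n) a2⁻¹).le_opNorm _
          _ = ‖vecMulCLM (n := n) a2⁻¹‖ * r := by rw [hrdef]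
      have e2 : ‖((c * ‖Sc b‖ ^ (-(n : ℝ)) : ℝ) : ℂ) • vecMulCLM (n := n) a2⁻¹ (a - b)‖
          ≤ |c| * (‖Sc b‖ ^ n)⁻¹ * (‖vecMulCLM (n := n) a2⁻¹‖ * d) := by
        rw [norm_smul, Complex.norm_real, Real.norm_eq_abs, hrpb, abs_mul,
          abs_of_nonneg (inv_nonneg.mpr (pow_nonneg (norm_nonneg (Sc b)) n))]
        refine mul_le_mul_of_nonneg_left ?_
          (mul_nonneg (abs_nonneg _) (inv_nonneg.mpr (pow_nonneg (norm_nonneg (Sc b)) n)))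
        calc ‖vecMulCLM (n := n) a2⁻¹ (a - b)‖ ≤ ‖vecMulCLM (n := n) a2⁻¹‖ * ‖a - b‖ :=
              (vecMulCLM (n := n) a2⁻¹).le_opNorm _
          _ = ‖vecMulCLM (n := n) a2⁻¹‖ * d := by rw [habn]
      calc ‖_ + _‖ ≤ _ + _ := norm_add_le _ _
        _ ≤ _ := add_le_add e1 e2
    have hsbinv : (‖Sc b‖ ^ n)⁻¹ ≤ (m1 ^ n)⁻¹ := by
      apply inv_anti₀ (pow_pos hm10 n)
      exact pow_le_pow_left₀ hm10.le hsb n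
    have step : r ^ n * ‖X1‖ ≤ r ^ n * (|c| * (((n:ℝ) / m1 ^ (n+1)) * (‖Sc‖ * d))
        * (‖vecMulCLM (n := n) a2⁻¹‖ * r)
        + |c| * (m1 ^ n)⁻¹ * (‖vecMulCLM (n := n) a2⁻¹‖ * d)) := by
      refine mul_le_mul_of_nonneg_left ?_ hrpow.le
      refine le_trans hnorm (add_le_add ?_ ?_)
      · refine mul_le_mul_of_nonneg_right ?_ (mul_nonneg (norm_nonneg _) hr0.le)
        exact mul_le_mul_of_nonneg_left hinvdiff (abs_nonneg c)
      · refine mul_le_mul_of_nonneg_right ?_ (mul_nonneg (norm_nonneg _) hd0.le)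
        exact mul_le_mul_of_nonneg_left hsbinv (abs_nonneg c)
    refine le_trans step (le_of_eq ?_)
    rw [hC1def, hm1]
    rw [div_pow, div_pow]
    field_simp
    ring
  -- Term 2
  have hT2 : r ^ n * ‖X2‖ ≤ C2 * d := by
    have hconv : ((2:ℝ) - n) = -((k:ℝ)) := by rw [hk]; push_cast; ring
    have hra2 : r ^ ((2:ℝ) - n) = (r ^ k)⁻¹ := by
      rw [hconv, ← Real.rpow_natCast r k, ← Real.rpow_neg hr0.le]
    have hrb2 : ‖b‖ ^ ((2:ℝ) - n) = (‖b‖ ^ k)⁻¹ := by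
      rw [hconv, ← Real.rpow_natCast ‖b‖ k, ← Real.rpow_neg hb0'.le]
    have hsa : r / 2 ≤ r := by linarith
    have hinvdiff : |(r ^ k)⁻¹ - (‖b‖ ^ k)⁻¹| ≤ ((k:ℝ) / (r/2) ^ (k+1)) * d := by
      calc |(r ^ k)⁻¹ - (‖b‖ ^ k)⁻¹| ≤ ((k:ℝ) / (r/2) ^ (k+1)) * |r - ‖b‖| :=
            lip_inv_pow k hm0 hsa hblow
        _ ≤ ((k:ℝ) / (r/2) ^ (k+1)) * d :=
            mul_le_mul_of_nonneg_left hdist_ab (by positivity)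
    have hθa : r⁻¹ • a ∈ sphere (0 : EuclideanSpace ℝ (Fin n)) 1 := by
      rw [mem_sphere_zero_iff_norm, norm_smul, Real.norm_eq_abs,
        abs_of_pos (inv_pos.mpr hr0), ← hrdef, inv_mul_cancel₀ hr0.ne']
    have hθb : ‖b‖⁻¹ • b ∈ sphere (0 : EuclideanSpace ℝ (Fin n)) 1 := by
      rw [mem_sphere_zero_iff_norm, norm_smul, Real.norm_eq_abs,
        abs_of_pos (inv_pos.mpr hb0'), inv_mul_cancel₀ hb0'.ne']
    have hra : r ∈ Icc (0:ℝ) D := ⟨hr0.le, hrD⟩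
    have hrb : ‖b‖ ∈ Icc (0:ℝ) D := ⟨hb0'.le, hbD⟩
    have hAa : ‖A₂ (r⁻¹ • a) r‖ ≤ K₂ := hK2 _ hθa _ hra
    have hθdiff : ‖r⁻¹ • a - ‖b‖⁻¹ • b‖ ≤ 2 * d / r := by
      have := unit_vec_lip ha0 hb0
      rw [habn, ← hrdef] at this
      exact this
    have hAdiff : ‖A₂ (r⁻¹ • a) r - A₂ (‖b‖⁻¹ • b) ‖b‖‖ ≤ |L| * (2 * d / r + d) := by
      have h := hA₂ (r⁻¹ • a, r) ⟨hθa, hra⟩ (‖b‖⁻¹ • b, ‖b‖) ⟨hθb, hrb⟩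
      simp only at h
      calc ‖A₂ (r⁻¹ • a) r - A₂ (‖b‖⁻¹ • b) ‖b‖‖
          ≤ L * (‖r⁻¹ • a - ‖b‖⁻¹ • b‖ + |r - ‖b‖|) := h
        _ ≤ |L| * (‖r⁻¹ • a - ‖b‖⁻¹ • b‖ + |r - ‖b‖|) :=
            mul_le_mul_of_nonneg_right (le_abs_self L)
              (add_nonneg (norm_nonneg _) (abs_nonneg _))
        _ ≤ |L| * (2 * d / r + d) :=
            mul_le_mul_of_nonneg_left (by linarith) (abs_nonneg L)
    have hXeq : X2 = (((r ^ ((2:ℝ) - n) - ‖b‖ ^ ((2:ℝ) - n) : ℝ)) : ℂ) • A₂ (r⁻¹ • a) r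
        + ((‖b‖ ^ ((2:ℝ) - n) : ℝ) : ℂ) • (A₂ (r⁻¹ • a) r - A₂ (‖b‖⁻¹ • b) ‖b‖) := by
      rw [hX2, Complex.ofReal_sub]
      module
    have hnorm : ‖X2‖ ≤ |(r ^ k)⁻¹ - (‖b‖ ^ k)⁻¹| * K₂
        + ((r/2) ^ k)⁻¹ * (|L| * (2 * d / r + d)) := by
      rw [hXeq]
      have e1 : ‖(((r ^ ((2:ℝ) - n) - ‖b‖ ^ ((2:ℝ) - n) : ℝ)) : ℂ) • A₂ (r⁻¹ • a) r‖
          ≤ |(r ^ k)⁻¹ - (‖b‖ ^ k)⁻¹| * K₂ := by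
        rw [norm_smul, Complex.norm_real, Real.norm_eq_abs, hra2, hrb2]
        exact mul_le_mul_of_nonneg_left hAa (abs_nonneg _)
      have e2 : ‖((‖b‖ ^ ((2:ℝ) - n) : ℝ) : ℂ) • (A₂ (r⁻¹ • a) r - A₂ (‖b‖⁻¹ • b) ‖b‖)‖
          ≤ ((r/2) ^ k)⁻¹ * (|L| * (2 * d / r + d)) := by
        rw [norm_smul, Complex.norm_real, Real.norm_eq_abs, hrb2,
          abs_of_nonneg (inv_nonneg.mpr (pow_nonneg (norm_nonneg b) k))]
        have hbinv : (‖b‖ ^ k)⁻¹ ≤ ((r/2) ^ k)⁻¹ := by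
          apply inv_anti₀ (pow_pos hm0 k)
          exact pow_le_pow_left₀ hm0.le hblow k
        calc (‖b‖ ^ k)⁻¹ * ‖A₂ (r⁻¹ • a) r - A₂ (‖b‖⁻¹ • b) ‖b‖‖
            ≤ (‖b‖ ^ k)⁻¹ * (|L| * (2 * d / r + d)) :=
              mul_le_mul_of_nonneg_left hAdiff
                (inv_nonneg.mpr (pow_nonneg (norm_nonneg b) k))
          _ ≤ ((r/2) ^ k)⁻¹ * (|L| * (2 * d / r + d)) :=
              mul_le_mul_of_nonneg_right hbinv
                (mul_nonneg (abs_nonneg L) (by positivity))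
      calc ‖_ + _‖ ≤ _ + _ := norm_add_le _ _
        _ ≤ _ := add_le_add e1 e2
    have step : r ^ n * ‖X2‖ ≤ r ^ n * ((((k:ℝ) / (r/2) ^ (k+1)) * d) * K₂
        + ((r/2) ^ k)⁻¹ * (|L| * (2 * d / r + d))) := by
      refine mul_le_mul_of_nonneg_left ?_ hrpow.le
      refine le_trans hnorm (add_le_add ?_ le_rfl)
      exact mul_le_mul_of_nonneg_right hinvdiff hK20
    refine le_trans step ?_
    have heq : r ^ n * ((((k:ℝ) / (r/2) ^ (k+1)) * d) * K₂
        + ((r/2) ^ k)⁻¹ * (|L| * (2 * d / r + d)))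
        = ((k:ℝ) * 2^(k+1) * K₂ * r + |L| * 2^k * (2*r + r^2)) * d := by
      rw [hk]
      rw [div_pow, div_pow]
      field_simp
      ring
    rw [heq, hC2def]
    have hr2D : r^2 ≤ D^2 := pow_le_pow_left₀ hr0.le hrD 2
    have : (k:ℝ) * 2^(k+1) * K₂ * r + |L| * 2^k * (2*r + r^2)
        ≤ (k:ℝ) * 2^(k+1) * K₂ * D + |L| * 2^k * (2*D + D^2) := by
      have h1 : (k:ℝ) * 2^(k+1) * K₂ * r ≤ (k:ℝ) * 2^(k+1) * K₂ * D := by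
        refine mul_le_mul_of_nonneg_left hrD (by positivity)
      have h2 : |L| * 2^k * (2*r + r^2) ≤ |L| * 2^k * (2*D + D^2) := by
        refine mul_le_mul_of_nonneg_left (by linarith) (by positivity)
      linarith
    exact mul_le_mul_of_nonneg_right this hd0.le
  -- Term 3
  have hT3 : r ^ n * ‖X3‖ ≤ C3 * d := by
    have hamem : a ∈ closedBall (0 : EuclideanSpace ℝ (Fin n)) D := by
      rw [mem_closedBall_zero_iff, ← hrdef]; exact hrD
    have hbmem : b ∈ closedBall (0 : EuclideanSpace ℝ (Fin n)) D := by
      rw [mem_closedBall_zero_iff]; exact hbD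
    have hga : ‖cgrad B₁ a‖ ≤ KB := hKBb a hamem
    have hgdiff : ‖cgrad B₁ a - cgrad B₁ b‖ ≤ KB * d := by
      have := hKBl a hamem b hbmem
      rw [habn] at this
      exact this
    have hlogdiff : |Real.log r - Real.log ‖b‖| ≤ (2 / r) * d := by
      have hsa : r / 2 ≤ r := by linarith
      calc |Real.log r - Real.log ‖b‖| ≤ (r/2)⁻¹ * |r - ‖b‖| := lip_log hm0 hsa hblow
        _ ≤ (r/2)⁻¹ * d := mul_le_mul_of_nonneg_left hdist_ab (by positivity)
        _ = (2 / r) * d := by rw [inv_div]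
    have hlogb : |Real.log ‖b‖| ≤ 2 / r + 2 * |Real.log D| := by
      have hub : Real.log ‖b‖ ≤ Real.log D := Real.log_le_log hb0' hbD
      have hlb : Real.log (r/2) ≤ Real.log ‖b‖ := Real.log_le_log hm0 hblow
      have hneg : -Real.log (r/2) ≤ 2 / r := by
        have := neg_log_le_inv hm0
        rw [inv_div] at this
        exact this
      have habsD : Real.log D ≤ |Real.log D| := le_abs_self _
      rw [abs_le]
      constructor
      · have h1 : -Real.log ‖b‖ ≤ -Real.log (r/2) := by linarith
        have : (0:ℝ) ≤ |Real.log D| := abs_nonneg _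
        linarith
      · have : (0:ℝ) ≤ 2 / r := by positivity
        have : (0:ℝ) ≤ |Real.log D| := abs_nonneg _
        linarith [le_abs_self (Real.log D), (by positivity : (0:ℝ) ≤ 2/r)]
    have hXeq : X3 = (((Real.log r - Real.log ‖b‖ : ℝ)) : ℂ) • cgrad B₁ a
        + ((Real.log ‖b‖ : ℝ) : ℂ) • (cgrad B₁ a - cgrad B₁ b) := by
      rw [hX3, Complex.ofReal_sub]
      module
    have hnorm : ‖X3‖ ≤ ((2/r) * d) * KB + (2 / r + 2 * |Real.log D|) * (KB * d) := by
      rw [hXeq]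
      have e1 : ‖(((Real.log r - Real.log ‖b‖ : ℝ)) : ℂ) • cgrad B₁ a‖
          ≤ ((2/r) * d) * KB := by
        rw [norm_smul, Complex.norm_real, Real.norm_eq_abs]
        calc |Real.log r - Real.log ‖b‖| * ‖cgrad B₁ a‖
            ≤ |Real.log r - Real.log ‖b‖| * KB :=
              mul_le_mul_of_nonneg_left hga (abs_nonneg _)
          _ ≤ ((2/r) * d) * KB := mul_le_mul_of_nonneg_right hlogdiff hKB0
      have e2 : ‖((Real.log ‖b‖ : ℝ) : ℂ) • (cgrad B₁ a - cgrad B₁ b)‖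
          ≤ (2 / r + 2 * |Real.log D|) * (KB * d) := by
        rw [norm_smul, Complex.norm_real, Real.norm_eq_abs]
        calc |Real.log ‖b‖| * ‖cgrad B₁ a - cgrad B₁ b‖
            ≤ |Real.log ‖b‖| * (KB * d) :=
              mul_le_mul_of_nonneg_left hgdiff (abs_nonneg _)
          _ ≤ (2 / r + 2 * |Real.log D|) * (KB * d) :=
              mul_le_mul_of_nonneg_right hlogb (mul_nonneg hKB0 hd0.le)
      calc ‖_ + _‖ ≤ _ + _ := norm_add_le _ _
        _ ≤ _ := add_le_add e1 e2
    have step : r ^ n * ‖X3‖ ≤ r ^ n * (((2/r) * d) * KB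
        + (2 / r + 2 * |Real.log D|) * (KB * d)) :=
      mul_le_mul_of_nonneg_left hnorm hrpow.le
    refine le_trans step ?_
    have heq : r ^ n * (((2/r) * d) * KB + (2 / r + 2 * |Real.log D|) * (KB * d))
        = KB * (4 * r^(k+1) + 2*|Real.log D| * r^(k+2)) * d := by
      rw [hk]
      field_simp
      ring
    rw [heq, hC3def]
    have h1 : r^(k+1) ≤ D^(k+1) := pow_le_pow_left₀ hr0.le hrD _
    have h2 : r^(k+2) ≤ D^(k+2) := pow_le_pow_left₀ hr0.le hrD _
    have : KB * (4 * r^(k+1) + 2*|Real.log D| * r^(k+2))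
        ≤ KB * (4 * D^(k+1) + 2*|Real.log D| * D^(k+2)) := by
      refine mul_le_mul_of_nonneg_left ?_ hKB0
      have : (0:ℝ) ≤ |Real.log D| := abs_nonneg _
      nlinarith
    exact mul_le_mul_of_nonneg_right this hd0.le
  -- Term 4
  have hT4 : r ^ n * ‖X4‖ ≤ C4 * d := by
    have hamem : a ∈ closedBall (0 : EuclideanSpace ℝ (Fin n)) D := by
      rw [mem_closedBall_zero_iff, ← hrdef]; exact hrD
    have hbmem : b ∈ closedBall (0 : EuclideanSpace ℝ (Fin n)) D := by
      rw [mem_closedBall_zero_iff]; exact hbD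
    have hgdiff : ‖cgrad C a - cgrad C b‖ ≤ KC * d := by
      have := hKCl a hamem b hbmem
      rw [habn] at this
      exact this
    have hrn : r ^ n ≤ D ^ n := pow_le_pow_left₀ hr0.le hrD n
    calc r ^ n * ‖X4‖ ≤ r ^ n * (KC * d) := by
          rw [hX4]; exact mul_le_mul_of_nonneg_left hgdiff hrpow.le
      _ ≤ D ^ n * (KC * d) := mul_le_mul_of_nonneg_right hrn (mul_nonneg hKC0 hd0.le)
      _ = C4 * d := by rw [hC4def]; ring
  -- combine
  have hnormsum : ‖V a - V b‖ ≤ ‖X1‖ + ‖X2‖ + ‖X3‖ + ‖X4‖ := by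
    rw [hsplit]
    refine le_trans (norm_add_le _ _) ?_
    refine add_le_add ?_ le_rfl
    refine le_trans (norm_add_le _ _) ?_
    exact add_le_add (norm_add_le _ _) le_rfl
  calc r ^ (n:ℝ) * ‖V a - V b‖ = r ^ n * ‖V a - V b‖ := by
        rw [Real.rpow_natCast]
    _ ≤ r ^ n * (‖X1‖ + ‖X2‖ + ‖X3‖ + ‖X4‖) :=
        mul_le_mul_of_nonneg_left hnormsum hrpow.le
    _ = r ^ n * ‖X1‖ + r ^ n * ‖X2‖ + r ^ n * ‖X3‖ + r ^ n * ‖X4‖ := by ring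
    _ ≤ C1 * d + C2 * d + C3 * d + C4 * d := by
        exact add_le_add (add_le_add (add_le_add hT1 hT2) hT3) hT4
    _ = (C1 + C2 + C3 + C4) * d := by ring
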